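/- Let n ≥ k and let A(x;t) be the (n+k)×(n+k) matrix with entries A_{i,j} = (−t)^{j−1} x_i^{λ_j+n+k−j} for 1 ≤ i ≤ n and A_{i,j} = x_{i−n}^{λ_j+n+k−j} for n < i ≤ n+k, where λ ∈ ℤ^{n+k}. Then det A(x;t) is divisible by (1+t)^k in the ring ℤ[x_1^{±1},...,x_n^{±1}][t]. Specifically, subtracting row i from row n+i for i = 1,...,k shows det A(x;t) = (1+t)^k det A'(x;t), where A'_{n+i,j} = (∑_{r=0}^{j−2} (−t)^r) x_i^{λ_j+n+k−j}. -/

import Mathlib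

open Polynomial

/-- The matrix `A(x;t)`: entry `(−t)^{j−1} x_i^{λ_j+n+k−j}` in the top `n` rows,
and `x_{i−n}^{λ_j+n+k−j}` in the bottom `k` rows (1-indexed; here 0-indexed). -/
noncomputable def typeAMat {R : Type*} [CommRing R] (n k : ℕ) (hk : k ≤ n)
    (x : Fin n → Rˣ) (lam : Fin (n + k) → ℤ) :
    Matrix (Fin (n + k)) (Fin (n + k)) (Polynomial R) :=
  Matrix.of fun i j =>
    if h : (i : ℕ) < n then
      (-X) ^ (j : ℕ) *
        C ((x ⟨i, h⟩ ^ (lam j + ((n + k - 1 - (j : ℕ) : ℕ) : ℤ)) : Rˣ) : R)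
    else
      C ((x ⟨(i : ℕ) - n, by have := i.isLt; omega⟩ ^
          (lam j + ((n + k - 1 - (j : ℕ) : ℕ) : ℤ)) : Rˣ) : R)

/-- The matrix `A'(x;t)`: same top rows, but bottom entries carry `∑_{r=0}^{j−2} (−t)^r`. -/
noncomputable def typeAMat' {R : Type*} [CommRing R] (n k : ℕ) (hk : k ≤ n)
    (x : Fin n → Rˣ) (lam : Fin (n + k) → ℤ) :
    Matrix (Fin (n + k)) (Fin (n + k)) (Polynomial R) :=
  Matrix.of fun i j =>
    if h : (i : ℕ) < n then
      (-X) ^ (j : ℕ) *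
        C ((x ⟨i, h⟩ ^ (lam j + ((n + k - 1 - (j : ℕ) : ℕ) : ℤ)) : Rˣ) : R)
    else
      (∑ r ∈ Finset.range (j : ℕ), (-X) ^ r) *
        C ((x ⟨(i : ℕ) - n, by have := i.isLt; omega⟩ ^
            (lam j + ((n + k - 1 - (j : ℕ) : ℕ) : ℤ)) : Rˣ) : R)

/-- `det A(x;t) = (1+t)^k · det A'(x;t)`; in particular `(1+t)^k` divides `det A(x;t)`. -/
theorem stmt12 {R : Type*} [CommRing R] (n k : ℕ) (hk : k ≤ n)
    (x : Fin n → Rˣ) (lam : Fin (n + k) → ℤ) :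
    (typeAMat n k hk x lam).det = (1 + X) ^ k * (typeAMat' n k hk x lam).det ∧
    (1 + X) ^ k ∣ (typeAMat n k hk x lam).det := by
  set P : Matrix (Fin (n + k)) (Fin (n + k)) (Polynomial R) :=
    Matrix.of fun i j => if i = j then 1 else if (j : ℕ) + n = (i : ℕ) then 1 else 0 with hP
  set d : Fin (n + k) → Polynomial R :=
    fun i => if (i : ℕ) < n then 1 else 1 + X with hd
  have key : typeAMat n k hk x lam = P * (Matrix.diagonal d * typeAMat' n k hk x lam) := by
    refine Matrix.ext fun i j => ?_
    rw [Matrix.mul_apply]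
    by_cases hi : (i : ℕ) < n
    · rw [Finset.sum_eq_single i]
      · simp only [hP, hd, Matrix.of_apply, if_pos rfl, if_true, one_mul,
          Matrix.diagonal_mul, typeAMat, typeAMat', dif_pos hi, if_pos hi, one_mul]
      · intro l _ hl
        have h1 : i ≠ l := fun h => hl h.symm
        have h2 : ¬ ((l : ℕ) + n = (i : ℕ)) := by omega
        simp [hP, h1, h2]
      · simp
    · -- bottom rows
      have hilt := i.isLt
      have hcn : (i : ℕ) - n < n := by omega
      set c : Fin (n + k) := ⟨(i : ℕ) - n, by omega⟩ with hcdef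
      have hic : i ≠ c := by
        intro h
        have : (i : ℕ) = (c : ℕ) := by rw [h]
        simp only [hcdef] at this
        omega
      have hsum : ∀ l : Fin (n + k),
          P i l * (Matrix.diagonal d * typeAMat' n k hk x lam) l j
          = (if l = i then (Matrix.diagonal d * typeAMat' n k hk x lam) l j else 0)
            + (if l = c then (Matrix.diagonal d * typeAMat' n k hk x lam) l j else 0) := by
        intro l
        by_cases h1 : l = i
        · have hlc : l ≠ c := by rw [h1]; exact hic
          have hPil : P i l = 1 := by simp [hP, h1]
          rw [if_pos h1, if_neg hlc, hPil, one_mul, add_zero, h1]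
        · rw [if_neg h1]
          by_cases h2 : l = c
          · have hPil : P i l = 1 := by
              have hne : i ≠ l := fun h => h1 h.symm
              have hln : (l : ℕ) + n = (i : ℕ) := by
                rw [h2]; simp only [hcdef]; omega
              simp [hP, hne, hln]
            rw [hPil, one_mul, zero_add, if_pos h2, h2]
          · have hPil : P i l = 0 := by
              have hne : i ≠ l := fun h => h1 h.symm
              have h3 : ¬ ((l : ℕ) + n = (i : ℕ)) := by
                intro h
                exact h2 (Fin.ext (by simp only [hcdef]; omega))
              simp [hP, hne, h3]
            rw [hPil, zero_mul, if_neg h2, add_zero]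
      rw [Finset.sum_congr rfl (fun l _ => hsum l), Finset.sum_add_distrib,
        Finset.sum_ite_eq' Finset.univ i, Finset.sum_ite_eq' Finset.univ c,
        if_pos (Finset.mem_univ i), if_pos (Finset.mem_univ c)]
      have hcnn : (c : ℕ) < n := hcn
      simp only [Matrix.diagonal_mul, hd]
      rw [if_neg hi, if_pos hcnn]
      simp only [typeAMat, typeAMat', Matrix.of_apply, dif_neg hi, dif_pos hcnn]
      have geom : (1 + X : Polynomial R) * (∑ r ∈ Finset.range (j : ℕ), (-X) ^ r)
          = 1 - (-X) ^ (j : ℕ) := by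
        have h := geom_sum_mul (-X : Polynomial R) (j : ℕ)
        linear_combination -h
      rw [← mul_assoc, geom]
      have hxc : x ⟨(c : ℕ), hcnn⟩ = x ⟨(i : ℕ) - n, by omega⟩ := rfl
      rw [hxc]
      ring
  have hdetP : P.det = 1 := by
    rw [Matrix.det_of_lowerTriangular P]
    · exact Finset.prod_eq_one fun i _ => by simp [hP]
    · intro i j hij
      have hij' : (i : ℕ) < (j : ℕ) := hij
      have h1 : i ≠ j := fun h => by simp [h] at hij'
      have h2 : ¬ ((j : ℕ) + n = (i : ℕ)) := by omega
      simp [hP, h1, h2]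
  have hdetD : (Matrix.diagonal d).det = (1 + X : Polynomial R) ^ k := by
    rw [Matrix.det_diagonal]
    have : ∀ i : Fin (n + k), d i =
        (fun m : ℕ => if m < n then (1 : Polynomial R) else 1 + X) (i : ℕ) := fun i => rfl
    rw [Finset.prod_congr rfl fun i _ => this i,
      Fin.prod_univ_eq_prod_range (fun m : ℕ => if m < n then (1 : Polynomial R) else 1 + X),
      Finset.prod_range_add]
    rw [Finset.prod_eq_one (fun m hm => by
      rw [if_pos (Finset.mem_range.mp hm)]), one_mul]
    rw [Finset.prod_congr rfl (fun m _ => by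
      rw [if_neg (by omega : ¬ n + m < n)]), Finset.prod_const, Finset.card_range]
  have hmain : (typeAMat n k hk x lam).det
      = (1 + X) ^ k * (typeAMat' n k hk x lam).det := by
    rw [key, Matrix.det_mul, Matrix.det_mul, hdetP, hdetD, one_mul]
  exact ⟨hmain, ⟨_, hmain⟩⟩
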